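/- Let k be a field of characteristic p > 0 and let K = k((t))[z]/(z^p − f) with f ∈ k((t)). Define the coaction ψ : K → K[ε]/(ε^p) over k((t)) by z ↦ z + ε, and the coaction θ on k[x,y] by x ↦ x, y ↦ y + xε. A k-algebra homomorphism γ : k[x,y] → K is equivariant (i.e. ψ ∘ γ = (γ ⊗ id) ∘ θ) if and only if there exist a, b ∈ k((t)) with γ(x) = a and γ(y) = b + a·z. -/

import Mathlib

open Polynomial

set_option synthInstance.maxHeartbeats 1000000 in
set_option maxHeartbeats 2000000 in
theorem aux15 (p : ℕ) (hp2 : 2 ≤ p) (k : Type*) [Field k] (f : LaurentSeries k)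
    (ψ : AdjoinRoot ((X : (LaurentSeries k)[X]) ^ p - C f) →ₐ[LaurentSeries k]
      AdjoinRoot ((X : (AdjoinRoot ((X : (LaurentSeries k)[X]) ^ p - C f))[X]) ^ p))
    (hψ : ψ (AdjoinRoot.root ((X : (LaurentSeries k)[X]) ^ p - C f)) =
      AdjoinRoot.of _ (AdjoinRoot.root ((X : (LaurentSeries k)[X]) ^ p - C f)) +
        AdjoinRoot.root ((X : (AdjoinRoot ((X : (LaurentSeries k)[X]) ^ p - C f))[X]) ^ p))
    (u w : AdjoinRoot ((X : (LaurentSeries k)[X]) ^ p - C f))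
    (h : ψ u = AdjoinRoot.of _ u +
        AdjoinRoot.of _ w *
          AdjoinRoot.root ((X : (AdjoinRoot ((X : (LaurentSeries k)[X]) ^ p - C f))[X]) ^ p)) :
    (∃ c, w = algebraMap (LaurentSeries k) _ c) ∧
      ∃ b, u = algebraMap (LaurentSeries k) _ b +
        w * AdjoinRoot.root ((X : (LaurentSeries k)[X]) ^ p - C f) := by
  have hg : (X ^ p - C f).Monic := monic_X_pow_sub_C f (by omega)
  have hdegg : (X ^ p - C f).degree = (p : WithBot ℕ) := degree_X_pow_sub_C (by omega) f
  have hK : Nontrivial (AdjoinRoot (X ^ p - C f)) := by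
    refine ⟨⟨1, 0, fun h01 => ?_⟩⟩
    have hdvd1 := AdjoinRoot.mk_eq_mk.mp
      (show AdjoinRoot.mk (X ^ p - C f) 1 = AdjoinRoot.mk (X ^ p - C f) 0 by simpa using h01)
    rw [sub_zero] at hdvd1
    have := degree_eq_zero_of_isUnit (isUnit_of_dvd_one hdvd1)
    rw [hdegg] at this
    exact absurd this (by exact_mod_cast by omega)
  have hφ : Function.Injective (algebraMap (LaurentSeries k) (AdjoinRoot (X ^ p - C f))) :=
    (algebraMap (LaurentSeries k) (AdjoinRoot (X ^ p - C f))).injective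
  obtain ⟨P₀, hP₀⟩ := AdjoinRoot.mk_surjective (g := X ^ p - C f) u
  set P : (LaurentSeries k)[X] := P₀ %ₘ (X ^ p - C f) with hPdef
  have hmkP : AdjoinRoot.mk (X ^ p - C f) P = u := by
    rw [hPdef, modByMonic_eq_sub_mul_div _ (X ^ p - C f), map_sub, map_mul, AdjoinRoot.mk_self, zero_mul,
      sub_zero, hP₀]
  have hdegP : P.degree < (p : WithBot ℕ) := by
    have := degree_modByMonic_lt P₀ hg
    rwa [hdegg] at this
  set R : (AdjoinRoot (X ^ p - C f))[X] := P.map (algebraMap (LaurentSeries k) (AdjoinRoot (X ^ p - C f))) with hRdef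
  have h1 : ψ u = AdjoinRoot.mk ((X : (AdjoinRoot (X ^ p - C f))[X]) ^ p)
      (Polynomial.taylor (AdjoinRoot.root (X ^ p - C f)) R) := by
    rw [← hmkP, ← AdjoinRoot.aeval_eq, ← Polynomial.aeval_algHom_apply, hψ, taylor_apply]
    show _ = AdjoinRoot.mk _ (eval₂ C (X + Polynomial.C (AdjoinRoot.root (X ^ p - C f))) R)
    rw [hom_eval₂, hRdef, eval₂_map, aeval_def,
      AdjoinRoot.algebraMap_eq' (LaurentSeries k)]
    congr 1
    · rw [map_add, AdjoinRoot.mk_X, AdjoinRoot.mk_C]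
      exact add_comm _ _
  have h2 : AdjoinRoot.of _ u + AdjoinRoot.of _ w * AdjoinRoot.root ((X : (AdjoinRoot (X ^ p - C f))[X]) ^ p)
      = AdjoinRoot.mk ((X : (AdjoinRoot (X ^ p - C f))[X]) ^ p) (Polynomial.C u + Polynomial.C w * X) := by
    rw [map_add, map_mul, AdjoinRoot.mk_C, AdjoinRoot.mk_C, AdjoinRoot.mk_X]
  have hdvd : ((X : (AdjoinRoot (X ^ p - C f))[X]) ^ p) ∣
      Polynomial.taylor (AdjoinRoot.root (X ^ p - C f)) R - (Polynomial.C u + Polynomial.C w * X) :=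
    AdjoinRoot.mk_eq_mk.mp (by rw [← h1, ← h2, h])
  have hnatR : (R.natDegree : WithBot ℕ) < (p : ℕ) := by
    rcases eq_or_ne R 0 with h0 | h0
    · simp only [h0, natDegree_zero, Nat.cast_zero]
      exact_mod_cast (by omega : 0 < p)
    · rw [← Polynomial.degree_eq_natDegree h0, hRdef, degree_map_eq_of_injective hφ]
      exact hdegP
  have hdegT : (Polynomial.taylor (AdjoinRoot.root (X ^ p - C f)) R).degree < (p : WithBot ℕ) :=
    lt_of_le_of_lt (degree_le_natDegree.trans_eq (by rw [natDegree_taylor])) hnatR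
  have hdegL : (Polynomial.C u + Polynomial.C w * X : (AdjoinRoot (X ^ p - C f))[X]).degree
      < (p : WithBot ℕ) := by
    refine lt_of_le_of_lt (degree_add_le _ _) ?_
    rw [max_lt_iff]
    refine ⟨lt_of_le_of_lt degree_C_le (by exact_mod_cast (by omega : 0 < p)), ?_⟩
    refine lt_of_le_of_lt (degree_mul_le _ _) ?_
    refine lt_of_le_of_lt (add_le_add_left degree_C_le _) ?_
    rw [degree_X]
    calc (0 : WithBot ℕ) + 1 = ((1 : ℕ) : WithBot ℕ) := by norm_num
    _ < (p : ℕ) := by exact_mod_cast (by omega : 1 < p)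
  have hD : Polynomial.taylor (AdjoinRoot.root (X ^ p - C f)) R = Polynomial.C u + Polynomial.C w * X := by
    obtain ⟨c, hc⟩ := hdvd
    rcases eq_or_ne c 0 with hc0 | hc0
    · rw [hc0, mul_zero] at hc
      exact sub_eq_zero.mp hc
    · exfalso
      have hdegD : (Polynomial.taylor (AdjoinRoot.root (X ^ p - C f)) R
          - (Polynomial.C u + Polynomial.C w * X)).degree
          < (p : WithBot ℕ) := lt_of_le_of_lt (degree_sub_le _ _) (max_lt hdegT hdegL)
      rw [hc, mul_comm, (monic_X_pow p).degree_mul, degree_X_pow] at hdegD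
      have h0c : (0 : WithBot ℕ) ≤ c.degree := zero_le_degree_iff.mpr hc0
      exact absurd (lt_of_le_of_lt (le_add_of_nonneg_left h0c) hdegD) (lt_irrefl _)
  have hR : R = Polynomial.C u
      + Polynomial.C w * (X + Polynomial.C (-(AdjoinRoot.root (X ^ p - C f)))) := by
    have h' := congrArg (Polynomial.taylor (-(AdjoinRoot.root (X ^ p - C f)))) hD
    rwa [taylor_taylor, neg_add_cancel, taylor_zero, map_add, taylor_C, taylor_mul, taylor_C,
      taylor_X] at h'
  have hcoeff : ∀ i, algebraMap (LaurentSeries k) (AdjoinRoot (X ^ p - C f)) (P.coeff i) = R.coeff i := fun i =>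
    (Polynomial.coeff_map _ i).symm
  have h1c : algebraMap (LaurentSeries k) (AdjoinRoot (X ^ p - C f)) (P.coeff 1) = w := by
    rw [hcoeff 1, hR, mul_add, ← C_mul, coeff_add, coeff_add, coeff_C, coeff_C, coeff_C_mul,
      coeff_X_one]
    simp
  have h0c : algebraMap (LaurentSeries k) (AdjoinRoot (X ^ p - C f)) (P.coeff 0) = u + w * (-(AdjoinRoot.root (X ^ p - C f))) := by
    rw [hcoeff 0, hR, mul_add, ← C_mul, coeff_add, coeff_add, coeff_C_zero, coeff_C_zero,
      coeff_C_mul, coeff_X_zero]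
    ring
  refine ⟨⟨P.coeff 1, h1c.symm⟩, ⟨P.coeff 0, ?_⟩⟩
  rw [h0c]
  ring

set_option synthInstance.maxHeartbeats 1000000 in
set_option maxHeartbeats 2000000 in
/-- Equivariance criterion.  Let `K = k((t))[z]/(z^p − f)` with the `α_p`-coaction
`ψ : K → K[ε]/(ε^p)`, `z ↦ z + ε`, and let `k[x,y]` carry the coaction `θ` with
`x ↦ x`, `y ↦ y + x ε`; let `γε` be the map `k[x,y][ε]/(ε^p) → K[ε]/(ε^p)` induced by a
`k`-algebra map `γ : k[x,y] → K` with `ε ↦ ε`.  Then `γ` is equivariant, i.e.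
`ψ ∘ γ = γε ∘ θ`, iff there are `a, b ∈ k((t))` with `γ(x) = a` and `γ(y) = b + a·z`. -/
theorem stmt15 (p : ℕ) [Fact p.Prime] (k : Type*) [Field k] [CharP k p]
    (f : LaurentSeries k)
    (γ : MvPolynomial (Fin 2) k →ₐ[k]
      AdjoinRoot ((X : (LaurentSeries k)[X]) ^ p - C f))
    (ψ : AdjoinRoot ((X : (LaurentSeries k)[X]) ^ p - C f) →ₐ[LaurentSeries k]
      AdjoinRoot ((X : (AdjoinRoot ((X : (LaurentSeries k)[X]) ^ p - C f))[X]) ^ p))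
    (hψ : ψ (AdjoinRoot.root ((X : (LaurentSeries k)[X]) ^ p - C f)) =
      AdjoinRoot.of _ (AdjoinRoot.root ((X : (LaurentSeries k)[X]) ^ p - C f)) +
        AdjoinRoot.root ((X : (AdjoinRoot ((X : (LaurentSeries k)[X]) ^ p - C f))[X]) ^ p))
    (θ : MvPolynomial (Fin 2) k →ₐ[k]
      AdjoinRoot ((X : (MvPolynomial (Fin 2) k)[X]) ^ p))
    (hθx : θ (MvPolynomial.X 0) = AdjoinRoot.of _ (MvPolynomial.X 0))
    (hθy : θ (MvPolynomial.X 1) =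
      AdjoinRoot.of _ (MvPolynomial.X 1) +
        AdjoinRoot.of _ (MvPolynomial.X 0) *
          AdjoinRoot.root ((X : (MvPolynomial (Fin 2) k)[X]) ^ p))
    (γε : AdjoinRoot ((X : (MvPolynomial (Fin 2) k)[X]) ^ p) →+*
      AdjoinRoot ((X : (AdjoinRoot ((X : (LaurentSeries k)[X]) ^ p - C f))[X]) ^ p))
    (hγε : ∀ r : MvPolynomial (Fin 2) k, γε (AdjoinRoot.of _ r) = AdjoinRoot.of _ (γ r))
    (hγεe : γε (AdjoinRoot.root ((X : (MvPolynomial (Fin 2) k)[X]) ^ p)) =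
      AdjoinRoot.root ((X : (AdjoinRoot ((X : (LaurentSeries k)[X]) ^ p - C f))[X]) ^ p)) :
    (∀ q : MvPolynomial (Fin 2) k, ψ (γ q) = γε (θ q)) ↔
      ∃ a b : LaurentSeries k,
        γ (MvPolynomial.X 0) =
          algebraMap (LaurentSeries k)
            (AdjoinRoot ((X : (LaurentSeries k)[X]) ^ p - C f)) a ∧
        γ (MvPolynomial.X 1) =
          algebraMap (LaurentSeries k)
              (AdjoinRoot ((X : (LaurentSeries k)[X]) ^ p - C f)) b +
            algebraMap (LaurentSeries k)
                (AdjoinRoot ((X : (LaurentSeries k)[X]) ^ p - C f)) a *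
              AdjoinRoot.root ((X : (LaurentSeries k)[X]) ^ p - C f) := by
  have hp2 : 2 ≤ p := (Fact.out : p.Prime).two_le
  constructor
  · intro h
    have hx := h (MvPolynomial.X 0)
    rw [hθx, hγε] at hx
    obtain ⟨-, a, ha⟩ := aux15 p hp2 k f ψ hψ
      (γ (MvPolynomial.X 0)) 0 (by rw [hx, map_zero, zero_mul, add_zero])
    rw [zero_mul, add_zero] at ha
    have hy := h (MvPolynomial.X 1)
    rw [hθy, map_add, map_mul, hγε, hγε, hγεe] at hy
    obtain ⟨-, b, hb⟩ := aux15 p hp2 k f ψ hψ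
      (γ (MvPolynomial.X 1)) (γ (MvPolynomial.X 0)) hy
    exact ⟨a, b, ha, by rw [hb, ha]⟩
  · rintro ⟨a, b, ha, hb⟩ q
    have hψalg : ∀ x : LaurentSeries k,
        ψ (algebraMap (LaurentSeries k) (AdjoinRoot ((X : (LaurentSeries k)[X]) ^ p - C f)) x)
          = AdjoinRoot.of _
              (algebraMap (LaurentSeries k) (AdjoinRoot ((X : (LaurentSeries k)[X]) ^ p - C f)) x) :=
      fun x => ψ.commutes x
    have base0 : ψ (γ (MvPolynomial.X 0)) = γε (θ (MvPolynomial.X 0)) := by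
      rw [hθx, hγε, ha, hψalg]
    have base1 : ψ (γ (MvPolynomial.X 1)) = γε (θ (MvPolynomial.X 1)) := by
      rw [hθy, map_add, map_mul, hγε, hγε, hγεe, hb, ha, map_add, map_mul, hψ, hψalg, hψalg,
        map_add, map_mul]
      ring
    have base : ∀ n : Fin 2, ψ (γ (MvPolynomial.X n)) = γε (θ (MvPolynomial.X n)) := by
      intro n
      fin_cases n
      · exact base0
      · exact base1
    induction q using MvPolynomial.induction_on with
    | C c =>
        have hγC : γ (algebraMap k (MvPolynomial (Fin 2) k) c)
            = algebraMap (LaurentSeries k) (AdjoinRoot ((X : (LaurentSeries k)[X]) ^ p - C f))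
                (algebraMap k (LaurentSeries k) c) := γ.commutes c
        have hθC : θ (algebraMap k (MvPolynomial (Fin 2) k) c)
            = AdjoinRoot.of _ (algebraMap k (MvPolynomial (Fin 2) k) c) := θ.commutes c
        rw [show (MvPolynomial.C c : MvPolynomial (Fin 2) k)
            = algebraMap k (MvPolynomial (Fin 2) k) c from rfl, hγC, hψalg, hθC, hγε, hγC]
    | add q r hq hr => rw [map_add, map_add, map_add, map_add, hq, hr]
    | mul_X q n hq => rw [map_mul, map_mul, map_mul, map_mul, hq, base n]
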